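/- arXiv:2208.14444 — 3 statements merged into one kernel-verified Lean document; each statement's English description precedes it below -/
import Mathlib

section
/- Let T be a measure-preserving map of a probability space, ψ : ℕ → ℝ_{>0}, and suppose there exists c₁ > 0 with ψ(2n) ≥ c₁ · ψ(n)² for all n ≥ 1, and (1/n) log ψ(n) → 0 as n → ∞. Then ψ(n) ≤ 2/c₁ for all n ≥ 1. -/
/-- Exact exponential growth from supermultiplicativity. -/
theorem stmt_2 (ψ : ℕ → ℝ) (c₁ : ℝ) (hc : 0 < c₁)
    (hpos : ∀ n, 1 ≤ n → 0 < ψ n)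
    (hsup : ∀ n, 1 ≤ n → c₁ * (ψ n) ^ 2 ≤ ψ (2 * n))
    (hlim : Filter.Tendsto (fun n : ℕ => Real.log (ψ n) / n) Filter.atTop (nhds 0)) :
    ∀ n, 1 ≤ n → ψ n ≤ 2 / c₁ := by
  intro n₁ hn₁
  by_contra hcon
  push_neg at hcon
  set a : ℝ := c₁ * ψ n₁ with ha
  have ha2 : 2 < a := by
    have := (div_lt_iff₀ hc).mp hcon
    linarith [this]
  have ha0 : 0 < a := by linarith
  -- key iteration
  have key : ∀ k : ℕ, a ^ (2 ^ k) ≤ c₁ * ψ (2 ^ k * n₁) := by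
    intro k
    induction k with
    | zero => simp [ha]
    | succ k ih =>
      have hk1 : 1 ≤ 2 ^ k * n₁ := Nat.one_le_iff_ne_zero.mpr (by positivity)
      have h1 := hsup _ hk1
      have hψpos : 0 < ψ (2 ^ k * n₁) := hpos _ hk1
      have h2 : (a ^ (2 ^ k)) ^ 2 ≤ (c₁ * ψ (2 ^ k * n₁)) ^ 2 := by
        apply pow_le_pow_left₀ (by positivity) ih
      have h3 : (c₁ * ψ (2 ^ k * n₁)) ^ 2 = c₁ * (c₁ * ψ (2 ^ k * n₁) ^ 2) := by ring
      calc a ^ (2 ^ (k + 1)) = (a ^ (2 ^ k)) ^ 2 := by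
            rw [← pow_mul]; ring_nf
        _ ≤ c₁ * (c₁ * ψ (2 ^ k * n₁) ^ 2) := by rw [← h3]; exact h2
        _ ≤ c₁ * ψ (2 * (2 ^ k * n₁)) := by
            exact mul_le_mul_of_nonneg_left h1 hc.le
        _ = c₁ * ψ (2 ^ (k + 1) * n₁) := by ring_nf
  -- log bound
  have hlb : ∀ k : ℕ, Real.log a / n₁ - Real.log c₁ / (2 ^ k * n₁)
      ≤ Real.log (ψ (2 ^ k * n₁)) / (2 ^ k * n₁) := by
    intro k
    have hk1 : 1 ≤ 2 ^ k * n₁ := Nat.one_le_iff_ne_zero.mpr (by positivity)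
    have hψpos : 0 < ψ (2 ^ k * n₁) := hpos _ hk1
    have hlog : (2 ^ k : ℝ) * Real.log a ≤ Real.log c₁ + Real.log (ψ (2 ^ k * n₁)) := by
      have := Real.log_le_log (by positivity) (key k)
      rw [Real.log_pow, Real.log_mul hc.ne' hψpos.ne'] at this
      exact_mod_cast this
    have hd : (0:ℝ) < (2:ℝ) ^ k * n₁ := by
      have : (0:ℝ) < (n₁:ℝ) := by exact_mod_cast hn₁
      positivity
    have hn₁0 : (0:ℝ) < (n₁:ℝ) := by exact_mod_cast hn₁
    have h : Real.log a / n₁ = ((2:ℝ) ^ k * Real.log a) / ((2:ℝ) ^ k * n₁) := by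
      rw [mul_div_mul_left _ _ (by positivity : ((2:ℝ) ^ k) ≠ 0)]
    rw [h, div_sub_div_same]
    gcongr
    linarith
  -- subsequence tends to 0
  have hsub : Filter.Tendsto (fun k : ℕ => Real.log (ψ (2 ^ k * n₁)) / ((2 ^ k * n₁ : ℕ) : ℝ))
      Filter.atTop (nhds 0) := by
    apply hlim.comp
    apply Filter.tendsto_atTop_mono (f := fun k => k)
    · intro k
      calc k ≤ 2 ^ k := Nat.le_of_lt (Nat.lt_two_pow_self (n := k))
        _ ≤ 2 ^ k * n₁ := Nat.le_mul_of_pos_right _ hn₁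
    · exact Filter.tendsto_id
  have hcast : ∀ k : ℕ, ((2 ^ k * n₁ : ℕ) : ℝ) = (2:ℝ) ^ k * n₁ := by
    intro k; push_cast; ring
  have hsub' : Filter.Tendsto (fun k : ℕ => Real.log (ψ (2 ^ k * n₁)) / ((2:ℝ) ^ k * n₁))
      Filter.atTop (nhds 0) := by
    convert hsub using 2 with k
    rw [hcast]
  -- lower bound tends to log a / n₁
  have hlbt : Filter.Tendsto (fun k : ℕ => Real.log a / n₁ - Real.log c₁ / ((2:ℝ) ^ k * n₁))
      Filter.atTop (nhds (Real.log a / n₁ - 0)) := by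
    apply Filter.Tendsto.sub tendsto_const_nhds
    have : Filter.Tendsto (fun k : ℕ => (2:ℝ) ^ k * n₁) Filter.atTop Filter.atTop := by
      apply Filter.Tendsto.atTop_mul_const (by exact_mod_cast hn₁ : (0:ℝ) < (n₁:ℝ))
      exact tendsto_pow_atTop_atTop_of_one_lt one_lt_two
    exact Filter.Tendsto.div_atTop tendsto_const_nhds this
  have hle : Real.log a / n₁ - 0 ≤ 0 :=
    le_of_tendsto_of_tendsto' hlbt hsub' hlb
  have hloga : 0 < Real.log a := Real.log_pos (by linarith)
  have hn₁0 : (0:ℝ) < (n₁:ℝ) := by exact_mod_cast hn₁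
  rw [sub_zero] at hle
  have : 0 < Real.log a / n₁ := div_pos hloga hn₁0
  linarith
end

section
/- Let T be a continuous map of a compact metric space and φ a bounded nonnegative measurable function with φ₀ := inf over T-invariant Borel probability measures μ of ∫ φ dμ satisfying φ₀ > 0. Define P(t) := sup over invariant μ of (h_μ(T) + t ∫ φ dμ). Then the map t ↦ P(t) is strictly increasing and continuous on ℝ, satisfies P(t+ε) − P(t) ≥ ε·φ₀ and P(t+ε) − P(t) ≤ ε·(1 + sup φ) for ε > 0, and tends to ±∞ as t → ±∞; hence there exists a unique real c with P(−c) = 0. -/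
open MeasureTheory

/-- The pressure function `t ↦ P(t·φ)` is strictly increasing, continuous,
satisfies the stated increment bounds, tends to `±∞`, and vanishes at a unique
parameter `-c`. -/
theorem stmt_3 {X : Type*} [MetricSpace X] [CompactSpace X] [MeasurableSpace X]
    [BorelSpace X]
    (T : X → X) (hT : Continuous T)
    (h : Measure X → ℝ)
    (φ : X → ℝ) (hφmeas : Measurable φ) (hφ0 : ∀ x, 0 ≤ φ x)
    (B : ℝ) (hφB : ∀ x, φ x ≤ B)
    (Inv : Measure X → Prop)
    (hInv : ∀ μ, Inv μ ↔ IsProbabilityMeasure μ ∧ μ.map T = μ)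
    (hne : ∃ μ, Inv μ)
    (hh0 : ∀ μ, Inv μ → 0 ≤ h μ)
    (H : ℝ) (hhH : ∀ μ, Inv μ → h μ ≤ H)
    (φ₀ : ℝ)
    (hφ₀ : φ₀ = sInf {y | ∃ μ, Inv μ ∧ y = ∫ x, φ x ∂μ})
    (hφ₀pos : 0 < φ₀)
    (P : ℝ → ℝ)
    (hP : ∀ t, P t = sSup {y | ∃ μ, Inv μ ∧ y = h μ + t * ∫ x, φ x ∂μ}) :
    StrictMono P ∧ Continuous P ∧
    (∀ t : ℝ, ∀ ε > 0, ε * φ₀ ≤ P (t + ε) - P t ∧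
        P (t + ε) - P t ≤ ε * (1 + sSup (Set.range φ))) ∧
    Filter.Tendsto P Filter.atTop Filter.atTop ∧
    Filter.Tendsto P Filter.atBot Filter.atBot ∧
    (∃! c : ℝ, P (-c) = 0) := by
  obtain ⟨μ₀, hμ₀⟩ := hne
  haveI : IsProbabilityMeasure μ₀ := ((hInv μ₀).1 hμ₀).1
  have hXne : Nonempty X := by
    by_contra hX
    simp only [not_nonempty_iff] at hX
    have := measure_univ (μ := μ₀)
    rw [Set.univ_eq_empty_iff.2 hX] at this
    simp at this
  set M : ℝ := sSup (Set.range φ) with hM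
  have hrbdd : BddAbove (Set.range φ) := ⟨B, by rintro y ⟨x, rfl⟩; exact hφB x⟩
  have hφM : ∀ x, φ x ≤ M := fun x => le_csSup hrbdd ⟨x, rfl⟩
  have hM0 : 0 ≤ M := le_trans (hφ0 hXne.some) (hφM hXne.some)
  -- integrability and integral bounds
  have hint : ∀ μ : Measure X, Inv μ → Integrable φ μ := by
    intro μ hμ
    haveI : IsProbabilityMeasure μ := ((hInv μ).1 hμ).1
    exact (integrable_const B).mono' hφmeas.aestronglyMeasurable
      (Filter.Eventually.of_forall fun x => by
        rw [Real.norm_eq_abs, abs_of_nonneg (hφ0 x)]; exact hφB x)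
  have hintM : ∀ μ : Measure X, Inv μ → ∫ x, φ x ∂μ ≤ M := by
    intro μ hμ
    haveI : IsProbabilityMeasure μ := ((hInv μ).1 hμ).1
    calc ∫ x, φ x ∂μ ≤ ∫ _, M ∂μ := integral_mono (hint μ hμ) (integrable_const M) hφM
    _ = M := by simp
  have hint0 : ∀ μ : Measure X, Inv μ → (0:ℝ) ≤ ∫ x, φ x ∂μ :=
    fun μ hμ => integral_nonneg hφ0
  have hφ₀le : ∀ μ : Measure X, Inv μ → φ₀ ≤ ∫ x, φ x ∂μ := by
    intro μ hμ
    rw [hφ₀]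
    exact csInf_le ⟨0, by rintro y ⟨ν, hν, rfl⟩; exact hint0 ν hν⟩ ⟨μ, hμ, rfl⟩
  -- set structure
  have hSne : ∀ t : ℝ, Set.Nonempty {y | ∃ μ, Inv μ ∧ y = h μ + t * ∫ x, φ x ∂μ} :=
    fun t => ⟨h μ₀ + t * ∫ x, φ x ∂μ₀, μ₀, hμ₀, rfl⟩
  have hSbdd : ∀ t : ℝ, BddAbove {y | ∃ μ, Inv μ ∧ y = h μ + t * ∫ x, φ x ∂μ} := by
    intro t
    refine ⟨H + |t| * M, ?_⟩
    rintro y ⟨μ, hμ, rfl⟩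
    have h1 : t * ∫ x, φ x ∂μ ≤ |t| * M := by
      calc t * ∫ x, φ x ∂μ ≤ |t * ∫ x, φ x ∂μ| := le_abs_self _
      _ = |t| * |∫ x, φ x ∂μ| := abs_mul _ _
      _ ≤ |t| * M := by
          rw [abs_of_nonneg (hint0 μ hμ)]
          exact mul_le_mul_of_nonneg_left (hintM μ hμ) (abs_nonneg t)
    linarith [hhH μ hμ]
  have hmem : ∀ (t : ℝ) (μ : Measure X), Inv μ → h μ + t * ∫ x, φ x ∂μ ≤ P t := by
    intro t μ hμ
    rw [hP t]
    exact le_csSup (hSbdd t) ⟨μ, hμ, rfl⟩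
  -- key increment bounds
  have key : ∀ s t : ℝ, s < t → (t - s) * φ₀ ≤ P t - P s ∧ P t - P s ≤ (t - s) * M := by
    intro s t hst
    constructor
    · have : P s ≤ P t - (t - s) * φ₀ := by
        rw [hP s]
        apply csSup_le (hSne s)
        rintro y ⟨μ, hμ, rfl⟩
        have h1 : h μ + t * ∫ x, φ x ∂μ ≤ P t := hmem t μ hμ
        have h2 : (t - s) * φ₀ ≤ (t - s) * ∫ x, φ x ∂μ :=
          mul_le_mul_of_nonneg_left (hφ₀le μ hμ) (by linarith)
        nlinarith
      linarith
    · have : P t ≤ P s + (t - s) * M := by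
        rw [hP t]
        apply csSup_le (hSne t)
        rintro y ⟨μ, hμ, rfl⟩
        have h1 : h μ + s * ∫ x, φ x ∂μ ≤ P s := hmem s μ hμ
        have h2 : (t - s) * ∫ x, φ x ∂μ ≤ (t - s) * M :=
          mul_le_mul_of_nonneg_left (hintM μ hμ) (by linarith)
        nlinarith
      linarith
  have hmono : StrictMono P := by
    intro s t hst
    have := (key s t hst).1
    nlinarith
  have hcont : Continuous P := by
    refine (LipschitzWith.of_dist_le_mul (K := Real.toNNReal M) (f := P) ?_).continuous
    intro s t
    rw [Real.dist_eq, Real.dist_eq, Real.coe_toNNReal M hM0]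
    rcases lt_trichotomy s t with hst | rfl | hst
    · obtain ⟨k1, k2⟩ := key s t hst
      rw [abs_of_nonpos (by nlinarith), abs_of_neg (by linarith)]
      nlinarith
    · simp
    · obtain ⟨k1, k2⟩ := key t s hst
      rw [abs_of_nonneg (by nlinarith), abs_of_pos (by linarith)]
      nlinarith
  have htop : Filter.Tendsto P Filter.atTop Filter.atTop := by
    refine Filter.tendsto_atTop_mono' Filter.atTop
      (f₁ := fun t => P 0 + t * φ₀) ?_ ?_
    · filter_upwards [Filter.eventually_gt_atTop 0] with t ht
      have := (key 0 t ht).1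
      show P 0 + t * φ₀ ≤ P t
      linarith
    · exact Filter.tendsto_atTop_add_const_left _ _
        (Filter.Tendsto.atTop_mul_const hφ₀pos Filter.tendsto_id)
  have hbot : Filter.Tendsto P Filter.atBot Filter.atBot := by
    refine Filter.tendsto_atBot_mono' Filter.atBot
      (f₁ := fun t => P 0 + t * φ₀) ?_ ?_
    · filter_upwards [Filter.eventually_lt_atBot 0] with t ht
      have := (key t 0 ht).1
      show P t ≤ P 0 + t * φ₀
      linarith
    · exact Filter.tendsto_atBot_add_const_left _ _
        (Filter.Tendsto.atBot_mul_const hφ₀pos Filter.tendsto_id)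
  refine ⟨hmono, hcont, ?_, htop, hbot, ?_⟩
  · intro t ε hε
    obtain ⟨k1, k2⟩ := key t (t + ε) (by linarith)
    have : t + ε - t = ε := by ring
    rw [this] at k1 k2
    exact ⟨k1, le_trans k2 (by nlinarith)⟩
  · obtain ⟨a, ha⟩ := hcont.surjective htop hbot 0
    refine ⟨-a, by simpa using ha, ?_⟩
    intro c hc
    have := hmono.injective (hc.trans ha.symm)
    linarith [neg_eq_iff_eq_neg.1 this]
end

section
/- For p_j > 0 with ∑_{j=1}^N p_j ≤ 1 and reals a_j: ∑_j p_j(−log p_j + a_j) ≤ 1/e + (∑_j p_j) · log(∑_i e^{a_i}). -/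
/-- Convexity inequality (20.3.5) of Katok–Hasselblatt. -/
theorem stmt_8 {ι : Type*} [Fintype ι] (p a : ι → ℝ)
    (hp : ∀ i, 0 < p i) (hsum : ∑ i, p i ≤ 1) :
    ∑ j, p j * (-Real.log (p j) + a j)
      ≤ 1 / Real.exp 1 + (∑ j, p j) * Real.log (∑ i, Real.exp (a i)) := by
  rcases isEmpty_or_nonempty ι with h | h
  · simp
    positivity
  set S := ∑ i, p i with hS
  set Q := ∑ i, Real.exp (a i) with hQ
  have hSpos : 0 < S := Finset.sum_pos (fun i _ => hp i) Finset.univ_nonempty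
  have hQpos : 0 < Q := Finset.sum_pos (fun i _ => Real.exp_pos _) Finset.univ_nonempty
  have sum_le : ∑ j, (p j * (-Real.log (p j) + a j) + p j * Real.log S - p j * Real.log Q)
      ≤ ∑ j, (Real.exp (a j) * (S / Q) - p j) := by
    apply Finset.sum_le_sum
    intro j _
    have hpj := hp j
    have hx : 0 < Real.exp (a j) * S / (p j * Q) := by positivity
    have hlog := Real.log_le_sub_one_of_pos hx
    rw [Real.log_div (by positivity) (by positivity),
      Real.log_mul (Real.exp_pos _).ne' hSpos.ne',
      Real.log_mul hpj.ne' hQpos.ne', Real.log_exp] at hlog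
    have hmul := mul_le_mul_of_nonneg_left hlog hpj.le
    have heq : p j * (Real.exp (a j) * S / (p j * Q) - 1)
        = Real.exp (a j) * (S / Q) - p j := by
      field_simp
    rw [heq] at hmul
    nlinarith [hmul]
  have hL : ∑ j, (p j * (-Real.log (p j) + a j) + p j * Real.log S - p j * Real.log Q)
      = (∑ j, p j * (-Real.log (p j) + a j)) + S * Real.log S - S * Real.log Q := by
    simp [Finset.sum_add_distrib, Finset.sum_sub_distrib, ← Finset.sum_mul]
    rw [← hS]
  have hR : ∑ j, (Real.exp (a j) * (S / Q) - p j) = 0 := by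
    rw [Finset.sum_sub_distrib, ← Finset.sum_mul, ← hQ, ← hS]
    field_simp
    simp
  rw [hL, hR] at sum_le
  -- so LHS ≤ S log Q - S log S; now -S log S ≤ 1/e
  have hent : -(S * Real.log S) ≤ 1 / Real.exp 1 := by
    have hx : 0 < 1 / (Real.exp 1 * S) := by positivity
    have hlog := Real.log_le_sub_one_of_pos hx
    rw [Real.log_div one_ne_zero (by positivity), Real.log_one,
      Real.log_mul (Real.exp_pos 1).ne' hSpos.ne', Real.log_exp] at hlog
    have h1 : -Real.log S ≤ 1 / (Real.exp 1 * S) := by linarith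
    have := mul_le_mul_of_nonneg_left h1 hSpos.le
    have heq : S * (1 / (Real.exp 1 * S)) = 1 / Real.exp 1 := by field_simp
    rw [heq] at this
    linarith
  linarith
end
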